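/- Fix an integer N ≥ 2 and real numbers μ_i[0] > 0 for 0 ≤ i ≤ N−1, and let the sequences μ_i : ℕ → (0,∞) be determined by the recursion μ_i[n+1] = μ_i[n]·exp( 2·Σ_{j=0}^{i−1} μ_j[n+1] ). Then for every i with 1 ≤ i ≤ N−1, μ_i[n] → +∞ as n → ∞. -/
import Mathlib


/-- The recursive system modelling the energy exchange between `N` spherically symmetric
Vlasov beams: `μ_i[n+1] = μ_i[n]·exp(2·Σ_{j=0}^{i−1} μ_j[n+1])` for `0 ≤ i ≤ N−1`
(the empty sum being `0` for `i = 0`). -/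
def MuRec (N : ℕ) (μ : ℕ → ℕ → ℝ) : Prop :=
  ∀ i < N, ∀ n : ℕ,
    μ i (n + 1) = μ i n * Real.exp (2 * ∑ j ∈ Finset.range i, μ j (n + 1))

/-- **Blow-up of the beam-interaction recursion.** For `N ≥ 2` and positive data, every
sequence `μ_i[n]` with `1 ≤ i ≤ N−1` tends to `+∞` as `n → ∞`. -/
theorem mu_system_tendsto_atTop (N : ℕ) (hN : 2 ≤ N) (μ : ℕ → ℕ → ℝ)
    (hpos : ∀ i < N, ∀ n : ℕ, 0 < μ i n) (hμ0 : ∀ i < N, 0 < μ i 0)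
    (hrec : MuRec N μ) :
    ∀ i, 1 ≤ i → i < N →
      Filter.Tendsto (fun n => μ i n) Filter.atTop Filter.atTop := by
  intro i hi1 hiN
  have h0N : 0 < N := by omega
  -- μ 0 is constant
  have hconst : ∀ n, μ 0 n = μ 0 0 := by
    intro n
    induction n with
    | zero => rfl
    | succ n ih =>
      rw [hrec 0 h0N n, Finset.range_zero, Finset.sum_empty, mul_zero, Real.exp_zero,
        mul_one, ih]
  set r : ℝ := Real.exp (2 * μ 0 0) with hr
  have hr1 : 1 < r := by
    have := hμ0 0 h0N
    have : 0 < 2 * μ 0 0 := by linarith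
    calc 1 = Real.exp 0 := Real.exp_zero.symm
    _ < r := Real.exp_lt_exp.mpr this
  -- growth: μ i n ≥ μ i 0 * r^n
  have hgrow : ∀ n, μ i 0 * r ^ n ≤ μ i n := by
    intro n
    induction n with
    | zero => simp
    | succ n ih =>
      rw [hrec i hiN n]
      have hsum : μ 0 0 ≤ ∑ j ∈ Finset.range i, μ j (n + 1) := by
        have hmem : 0 ∈ Finset.range i := Finset.mem_range.mpr (by omega)
        calc μ 0 0 = μ 0 (n + 1) := (hconst (n + 1)).symm
        _ ≤ ∑ j ∈ Finset.range i, μ j (n + 1) :=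
          Finset.single_le_sum (fun j hj => (hpos j (by
            have := Finset.mem_range.mp hj; omega) (n + 1)).le) hmem
      have hre : r ≤ Real.exp (2 * ∑ j ∈ Finset.range i, μ j (n + 1)) :=
        Real.exp_le_exp.mpr (by linarith)
      have hμn : 0 < μ i n := hpos i hiN n
      calc μ i 0 * r ^ (n + 1) = (μ i 0 * r ^ n) * r := by ring
      _ ≤ μ i n * r := by
        apply mul_le_mul_of_nonneg_right ih (by linarith)
      _ ≤ μ i n * Real.exp (2 * ∑ j ∈ Finset.range i, μ j (n + 1)) :=
        mul_le_mul_of_nonneg_left hre hμn.le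
  have hbase : Filter.Tendsto (fun n => μ i 0 * r ^ n) Filter.atTop Filter.atTop :=
    Filter.Tendsto.const_mul_atTop (hμ0 i hiN) (tendsto_pow_atTop_atTop_of_one_lt hr1)
  exact Filter.tendsto_atTop_mono hgrow hbase
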